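/- Let r > 0, n ∈ ℕ, let φ : [−r,0] → ℝⁿ be continuous, x ∈ ℝⁿ, and let φ̂ˣ denote the extension of φ by the constant x on nonnegative times. Then the right derivative at t = 0 of the map t ↦ ‖(φ̂ˣ)_t‖²_V exists and equals |x|² − |φ(−r)|²; that is, lim_{t→0⁺} ( ‖(φ̂ˣ)_t‖²_V − ‖φ‖²_V ) / t = |x|² − |φ(−r)|². -/

import Mathlib

open MeasureTheory Set Filter Topology

/-- For a continuous `φ : [-r,0] → ℝⁿ` and `x ∈ ℝⁿ`, let `φ̂ˣ` be the extension of `φ`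
by the constant `x` on nonnegative times. The right derivative at `t = 0` of
`t ↦ ‖(φ̂ˣ)_t‖²_V` exists and equals `|x|² − |φ(−r)|²`:
`lim_{t→0⁺} (‖(φ̂ˣ)_t‖²_V − ‖φ‖²_V)/t = |x|² − |φ(−r)|²`, where
`‖ψ‖²_V = ∫_{-r}^0 |ψ(p)|² dp`. -/
theorem segment_norm_sq_right_derivative
    (r : ℝ) (hr : 0 < r) (n : ℕ)
    (φ : ℝ → EuclideanSpace ℝ (Fin n)) (hφ : ContinuousOn φ (Icc (-r) 0))
    (x : EuclideanSpace ℝ (Fin n)) :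
    Tendsto
      (fun t =>
        ((∫ p in Icc (-r) (0 : ℝ), ‖(if 0 ≤ t + p then x else φ (t + p))‖ ^ 2)
          - ∫ p in Icc (-r) (0 : ℝ), ‖φ p‖ ^ 2) / t)
      (nhdsWithin 0 (Ioi (0 : ℝ)))
      (nhds (‖x‖ ^ 2 - ‖φ (-r)‖ ^ 2)) := by
  set g : ℝ → ℝ := fun p => ‖φ p‖ ^ 2 with hgdef
  have hgc : ContinuousOn g (Icc (-r) 0) := hφ.norm.pow 2
  set G : ℝ → ℝ := fun u => ∫ p in (-r)..u, g p with hGdef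
  have hmem : (-r : ℝ) ∈ Icc (-r) (0:ℝ) := left_mem_Icc.2 (by linarith)
  have hnhds : 𝓝[Icc (-r) (0:ℝ)] (-r) = 𝓝[Ici (-r)] (-r) :=
    nhdsWithin_Icc_eq_nhdsGE (by linarith)
  have hIccmem : Icc (-r) (0:ℝ) ∈ 𝓝[Ici (-r)] (-r) := by
    rw [← hnhds]; exact self_mem_nhdsWithin
  have hIccmem' : Icc (-r) (0:ℝ) ∈ 𝓝[>] (-r) :=
    nhdsWithin_mono _ Ioi_subset_Ici_self hIccmem
  have hderiv : HasDerivWithinAt G (g (-r)) (Ici (-r)) (-r) := by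
    apply intervalIntegral.integral_hasDerivWithinAt_right
    · exact IntervalIntegrable.refl
    · exact ⟨Icc (-r) 0, hIccmem', hgc.aestronglyMeasurable measurableSet_Icc⟩
    · exact (hgc _ hmem).mono_of_mem_nhdsWithin hIccmem'
  have h1 : Tendsto (fun u => G u / (u + r)) (𝓝[Ioi (-r)] (-r)) (𝓝 (g (-r))) := by
    have hs := hasDerivWithinAt_iff_tendsto_slope.mp hderiv
    have hs' := hs.mono_left (nhdsWithin_mono _ (by
      intro u hu; exact ⟨(le_of_lt hu : -r ≤ u), ne_of_gt hu⟩ : Ioi (-r) ⊆ Ici (-r) \ {-r}))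
    refine hs'.congr (fun u => ?_)
    simp [slope, hGdef, intervalIntegral.integral_same, sub_neg_eq_add, div_eq_inv_mul]
  have h2 : Tendsto (fun t : ℝ => -r + t) (𝓝[Ioi 0] 0) (𝓝[Ioi (-r)] (-r)) := by
    apply tendsto_nhdsWithin_of_tendsto_nhds_of_eventually_within
    · exact ((continuous_const.add continuous_id).tendsto' 0 (-r) (by simp)).mono_left
        nhdsWithin_le_nhds
    · filter_upwards [self_mem_nhdsWithin] with t ht
      simpa using (ht : (0:ℝ) < t)
  have h3 : Tendsto (fun t => G (-r + t) / t) (𝓝[Ioi 0] 0) (𝓝 (g (-r))) := by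
    have := h1.comp h2
    refine this.congr (fun t => ?_)
    simp only [Function.comp]
    ring_nf
  have hIoo : Ioo (0:ℝ) r ∈ 𝓝[Ioi 0] 0 := Ioo_mem_nhdsGT_of_mem ⟨le_refl _, hr⟩
  have key : ∀ t ∈ Ioo (0:ℝ) r,
      ((∫ p in Icc (-r) (0 : ℝ), ‖(if 0 ≤ t + p then x else φ (t + p))‖ ^ 2)
          - ∫ p in Icc (-r) (0 : ℝ), ‖φ p‖ ^ 2) / t
        = ‖x‖ ^ 2 - G (-r + t) / t := by
    intro t ht
    obtain ⟨ht0, htr⟩ := ht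
    set f : ℝ → ℝ := fun p => ‖(if 0 ≤ t + p then x else φ (t + p))‖ ^ 2 with hfdef
    -- convert set integrals to interval integrals
    have hset1 : (∫ p in Icc (-r) (0 : ℝ), f p) = ∫ p in (-r)..(0:ℝ), f p := by
      rw [intervalIntegral.integral_of_le (by linarith), integral_Icc_eq_integral_Ioc]
    have hset2 : (∫ p in Icc (-r) (0 : ℝ), g p) = ∫ p in (-r)..(0:ℝ), g p := by
      rw [intervalIntegral.integral_of_le (by linarith), integral_Icc_eq_integral_Ioc]
    -- f = g ∘ (t + ·) a.e. on Ioc (-r) (-t)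
    have hae : ∀ᵐ p : ℝ, p ∈ Set.uIoc (-r) (-t) → f p = g (t + p) := by
      have hne : ∀ᵐ p : ℝ, p ≠ -t := by
        refine (ae_iff.2 ?_)
        simpa using (Real.volume_singleton (a := -t))
      filter_upwards [hne] with p hp hmem
      rw [uIoc_of_le (by linarith)] at hmem
      have hlt : p < -t := lt_of_le_of_ne hmem.2 hp
      have : ¬ (0 ≤ t + p) := by linarith
      simp [hfdef, hgdef, this]
    have hgshift : IntervalIntegrable (fun p => g (t + p)) volume (-r) (-t) := by
      apply ContinuousOn.intervalIntegrable
      have : ContinuousOn (fun p : ℝ => t + p) (uIcc (-r) (-t)) :=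
        (continuous_const.add continuous_id).continuousOn
      refine hgc.comp this ?_
      intro p hp
      rw [uIcc_of_le (by linarith)] at hp
      constructor <;> [linarith [hp.1]; linarith [hp.2]]
    have hint1 : IntervalIntegrable f volume (-r) (-t) := by
      rw [intervalIntegrable_iff] at hgshift ⊢
      exact hgshift.congr ((ae_restrict_iff' measurableSet_uIoc).2
        (hae.mono fun p hp hmem => (hp hmem).symm))
    have hint2 : IntervalIntegrable f volume (-t) 0 := by
      apply ContinuousOn.intervalIntegrable
      have : EqOn f (fun _ => ‖x‖ ^ 2) (uIcc (-t) 0) := by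
        intro p hp
        rw [uIcc_of_le (by linarith)] at hp
        have : 0 ≤ t + p := by linarith [hp.1]
        simp [hfdef, this]
      exact (continuousOn_const (c := ‖x‖ ^ 2)).congr this
    have hsplit : (∫ p in (-r)..(0:ℝ), f p)
        = (∫ p in (-r)..(-t), f p) + ∫ p in (-t)..(0:ℝ), f p :=
      (intervalIntegral.integral_add_adjacent_intervals hint1 hint2).symm
    have hval1 : (∫ p in (-r)..(-t), f p) = ∫ q in (t - r)..(0:ℝ), g q := by
      rw [intervalIntegral.integral_congr_ae hae]
      have := intervalIntegral.integral_comp_add_left (a := -r) (b := -t) g t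
      rw [this]
      norm_num
      rw [show t + -r = t - r by ring]
    have hval2 : (∫ p in (-t)..(0:ℝ), f p) = t * ‖x‖ ^ 2 := by
      have heq : EqOn f (fun _ => ‖x‖ ^ 2) (uIcc (-t) 0) := by
        intro p hp
        rw [uIcc_of_le (by linarith)] at hp
        have : 0 ≤ t + p := by linarith [hp.1]
        simp [hfdef, this]
      rw [intervalIntegral.integral_congr heq, intervalIntegral.integral_const]
      simp
    have hgint1 : IntervalIntegrable g volume (-r) (-r + t) := by
      apply (hgc.mono ?_).intervalIntegrable
      intro p hp
      rw [uIcc_of_le (by linarith)] at hp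
      constructor <;> [linarith [hp.1]; linarith [hp.2]]
    have hgint2 : IntervalIntegrable g volume (-r + t) 0 := by
      apply (hgc.mono ?_).intervalIntegrable
      intro p hp
      rw [uIcc_of_le (by linarith)] at hp
      constructor <;> [linarith [hp.1]; linarith [hp.2]]
    have hgsplit : (∫ p in (-r)..(0:ℝ), g p)
        = G (-r + t) + ∫ p in (-r + t)..(0:ℝ), g p :=
      (intervalIntegral.integral_add_adjacent_intervals hgint1 hgint2).symm
    have htr' : (t - r : ℝ) = -r + t := by ring
    rw [hset1, hset2, hsplit, hval1, hval2, hgsplit, htr']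
    field_simp
    ring
  have := (tendsto_const_nhds (x := ‖x‖ ^ 2)).sub h3
  rw [hgdef] at this
  refine this.congr' ?_
  filter_upwards [hIoo] with t ht
  exact (key t ht).symm
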